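/- Let g be the free 2-step nilpotent Lie algebra on m = 2s+1 generators and ℓ ∈ g* such that every leading principal 2k × 2k submatrix M_{2k} (k = 1,…,s) of the skew-symmetric matrix A with A_{ij}=ℓ[Z_i,Z_j] is invertible. Then the subspace p(ℓ) = z(g) + ℝZ_1 + Σ_{k=1}^{s} ℝ(Z_{2k+1} − μ_{2k}(M_{2k}^{-1} v_{2k+1})) satisfies ℓ([p(ℓ),p(ℓ)]) = 0, where v_{2k+1} = (ℓ[Z_1,Z_{2k+1}],…,ℓ[Z_{2k},Z_{2k+1}])ᵀ and μ_{2k} embeds ℝ^{2k} into g via the basis Z_1,…,Z_{2k}. -/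

import Mathlib

/-- Model of the free 2-step nilpotent Lie algebra on `m` generators: the first factor
records coordinates with respect to the generators `Z_1, …, Z_m`, the second factor records
coordinates with respect to the central basis vectors `Z_{ij} = [Z_i, Z_j]` for `i < j`. -/
def FN (m : ℕ) : Type :=
  (Fin m → ℝ) × ({p : Fin m × Fin m // p.1 < p.2} → ℝ)

namespace FN

variable {m : ℕ}

instance : AddCommGroup (FN m) := by unfold FN; infer_instance
noncomputable instance : Module ℝ (FN m) := by unfold FN; infer_instance

noncomputable instance : LieRing (FN m) where
  bracket x y := (0, fun p => x.1 p.1.1 * y.1 p.1.2 - x.1 p.1.2 * y.1 p.1.1)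
  add_lie x y z := by
    refine Prod.ext ?_ (funext fun p => ?_)
    · change (0 : Fin m → ℝ) = 0 + 0; simp
    · change (x.1 + y.1) p.1.1 * z.1 p.1.2 - (x.1 + y.1) p.1.2 * z.1 p.1.1 =
        (x.1 p.1.1 * z.1 p.1.2 - x.1 p.1.2 * z.1 p.1.1) + (y.1 p.1.1 * z.1 p.1.2 - y.1 p.1.2 * z.1 p.1.1)
      change ((x.1 + y.1) p.1.1) * _ - ((x.1 + y.1) p.1.2) * _ = _
      simp [Pi.add_apply]; ring
  lie_add x y z := by
    refine Prod.ext ?_ (funext fun p => ?_)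
    · change (0 : Fin m → ℝ) = 0 + 0; simp
    · change x.1 p.1.1 * (y.1 + z.1) p.1.2 - x.1 p.1.2 * (y.1 + z.1) p.1.1 =
        (x.1 p.1.1 * y.1 p.1.2 - x.1 p.1.2 * y.1 p.1.1) + (x.1 p.1.1 * z.1 p.1.2 - x.1 p.1.2 * z.1 p.1.1)
      change _ * ((y.1 + z.1) p.1.2) - _ * ((y.1 + z.1) p.1.1) = _
      simp [Pi.add_apply]; ring
  lie_self x := by
    refine Prod.ext rfl (funext fun p => ?_)
    change _ * _ - _ * _ = (0 : ℝ)
    ring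
  leibniz_lie x y z := by
    refine Prod.ext ?_ (funext fun p => ?_)
    · change (0 : Fin m → ℝ) = 0 + 0; simp
    · change x.1 p.1.1 * 0 - x.1 p.1.2 * 0 =
        (0 * z.1 p.1.2 - 0 * z.1 p.1.1) + (y.1 p.1.1 * 0 - y.1 p.1.2 * 0)
      ring

noncomputable instance : LieAlgebra ℝ (FN m) where
  lie_smul t x y := by
    refine Prod.ext ?_ (funext fun p => ?_)
    · change (0 : Fin m → ℝ) = t • 0; simp
    · change _ * ((t • y.1) p.1.2) - _ * ((t • y.1) p.1.1) = t • (_ - _)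
      simp [Pi.smul_apply, smul_eq_mul]; ring

/-- The generators `Z_1, …, Z_m`. -/
noncomputable def Z (i : Fin m) : FN m := (Pi.single i 1, 0)

/-- The embedding `μ_k : ℝ^k → FN m` sending `x` to `Σ x_i Z_i`. -/
noncomputable def mu (k : ℕ) (h : k ≤ m) (x : Fin k → ℝ) : FN m :=
  ∑ i : Fin k, x i • Z (Fin.castLE h i)

/-- Let `g` be the free 2-step nilpotent Lie algebra on `m = 2s+1` generators and `ℓ ∈ g*`
such that every leading principal `2k × 2k` submatrix `M_{2k}` of the skew-symmetric matrix
`A`, `A i j = ℓ[Z_i, Z_j]`, is invertible (`k = 1, …, s`).  Then the subspace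
`p(ℓ) = z(g) + ℝZ_1 + Σ_{k=1}^s ℝ(Z_{2k+1} − μ_{2k}(M_{2k}⁻¹ v_{2k+1}))` satisfies
`ℓ([p(ℓ), p(ℓ)]) = 0`, where `v_{2k+1} = (ℓ[Z_1,Z_{2k+1}], …, ℓ[Z_{2k},Z_{2k+1}])ᵀ` and
`μ_{2k}` embeds `ℝ^{2k}` into `g` via the basis `Z_1, …, Z_{2k}`. -/
theorem stmt14 (s : ℕ) (hs : 1 ≤ s) (ℓ : FN (2 * s + 1) →ₗ[ℝ] ℝ)
    (A : Matrix (Fin (2 * s + 1)) (Fin (2 * s + 1)) ℝ)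
    (hA : ∀ i j : Fin (2 * s + 1), A i j = ℓ ⁅Z i, Z j⁆)
    (M : ∀ k : Fin s, Matrix (Fin (2 * ((k : ℕ) + 1))) (Fin (2 * ((k : ℕ) + 1))) ℝ)
    (hM : ∀ (k : Fin s) (i j : Fin (2 * ((k : ℕ) + 1))),
      M k i j = A (Fin.castLE (by omega) i) (Fin.castLE (by omega) j))
    (hinv : ∀ k : Fin s, (M k).det ≠ 0)
    (v : ∀ k : Fin s, Fin (2 * ((k : ℕ) + 1)) → ℝ)
    (hv : ∀ (k : Fin s) (i : Fin (2 * ((k : ℕ) + 1))),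
      v k i = ℓ ⁅Z (Fin.castLE (n := 2 * ((k : ℕ) + 1)) (m := 2 * s + 1) (by omega) i), Z ⟨2 * ((k : ℕ) + 1), by omega⟩⁆)
    (w : Fin s → FN (2 * s + 1))
    (hw : ∀ k : Fin s, w k = Z ⟨2 * ((k : ℕ) + 1), by omega⟩ -
      mu (2 * ((k : ℕ) + 1)) (by omega) ((M k)⁻¹.mulVec (v k)))
    (p : Submodule ℝ (FN (2 * s + 1)))
    (hp : p = (LieAlgebra.center ℝ (FN (2 * s + 1))).toSubmodule ⊔
      Submodule.span ℝ ({Z 0} ∪ Set.range w)) :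
    ∀ X ∈ p, ∀ Y ∈ p, ℓ ⁅X, Y⁆ = 0 := by
  have lie_sum' : ∀ {ι : Type} (t : Finset ι) (x : FN (2 * s + 1)) (f : ι → FN (2 * s + 1)),
      ⁅x, t.sum f⁆ = t.sum fun i => ⁅x, f i⁆ := by
    intro ι t x f
    induction t using Finset.cons_induction with
    | empty => simp
    | cons a t ha ih => rw [Finset.sum_cons, Finset.sum_cons, lie_add, ih]
  have sum_lie' : ∀ {ι : Type} (t : Finset ι) (x : FN (2 * s + 1)) (f : ι → FN (2 * s + 1)),
      ⁅t.sum f, x⁆ = t.sum fun i => ⁅f i, x⁆ := by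
    intro ι t x f
    induction t using Finset.cons_induction with
    | empty => simp
    | cons a t ha ih => rw [Finset.sum_cons, Finset.sum_cons, add_lie, ih]
  -- Key: ℓ⁅Z i, w k⁆ = 0 whenever i < 2(k+1)
  have key : ∀ (k : Fin s) (i : Fin (2 * s + 1)), (i : ℕ) < 2 * ((k : ℕ) + 1) →
      ℓ ⁅Z i, w k⁆ = 0 := by
    intro k i hi
    have hnm : 2 * ((k : ℕ) + 1) ≤ 2 * s + 1 := by omega
    set c : Fin (2 * ((k : ℕ) + 1)) → ℝ := (M k)⁻¹.mulVec (v k) with hc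
    have hi' : i = Fin.castLE hnm ⟨(i : ℕ), hi⟩ := by ext; rfl
    rw [hw k, hi', lie_sub, map_sub]
    have hmu : ℓ ⁅Z (Fin.castLE hnm ⟨(i : ℕ), hi⟩), mu (2 * ((k : ℕ) + 1)) (by omega) c⁆
        = ∑ j, c j * M k ⟨(i : ℕ), hi⟩ j := by
      rw [mu, lie_sum', map_sum]
      refine Finset.sum_congr rfl fun j _ => ?_
      rw [lie_smul, map_smul, smul_eq_mul, hM, hA]
    rw [hmu, ← hv k ⟨(i : ℕ), hi⟩]
    have hMc : ∑ j, c j * M k ⟨(i : ℕ), hi⟩ j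
        = ((M k).mulVec ((M k)⁻¹.mulVec (v k))) ⟨(i : ℕ), hi⟩ := by
      simp [hc, Matrix.mulVec, dotProduct, mul_comm]
    rw [hMc, Matrix.mulVec_mulVec, Matrix.mul_nonsing_inv _ (isUnit_iff_ne_zero.mpr (hinv k)),
      Matrix.one_mulVec, sub_self]
  -- brackets of w's vanish after applying ℓ
  have keyw : ∀ j k : Fin s, ℓ ⁅w k, w j⁆ = 0 := by
    have keylt : ∀ j k : Fin s, (k : ℕ) < (j : ℕ) → ℓ ⁅w k, w j⁆ = 0 := by
      intro j k hkj
      rw [hw k, sub_lie, map_sub, key j _ (by simp; omega), mu, sum_lie', map_sum]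
      have : ∀ i ∈ Finset.univ, ℓ ⁅((M k)⁻¹.mulVec (v k)) i •
          Z (Fin.castLE (m := 2 * s + 1) (by omega) i), w j⁆ = 0 := by
        intro i _
        rw [smul_lie, map_smul, smul_eq_mul, key j _ (by simp; omega), mul_zero]
      rw [Finset.sum_congr rfl this]
      simp
    intro j k
    rcases lt_trichotomy (k : ℕ) (j : ℕ) with h | h | h
    · exact keylt j k h
    · have : k = j := Fin.ext h
      rw [this, lie_self, map_zero]
    · rw [← lie_skew, map_neg, keylt k j h, neg_zero]
  have keyS : ∀ a ∈ ({Z 0} ∪ Set.range w : Set (FN (2 * s + 1))),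
      ∀ b ∈ ({Z 0} ∪ Set.range w : Set (FN (2 * s + 1))), ℓ ⁅a, b⁆ = 0 := by
    rintro a (rfl | ⟨k, rfl⟩) b (rfl | ⟨j, rfl⟩)
    · rw [lie_self, map_zero]
    · exact key j _ (by simp)
    · rw [← lie_skew, map_neg, key k _ (by simp), neg_zero]
    · exact keyw j k
  -- lift to the span
  have keySpan : ∀ a ∈ Submodule.span ℝ ({Z 0} ∪ Set.range w),
      ∀ b ∈ Submodule.span ℝ ({Z 0} ∪ Set.range w), ℓ ⁅a, b⁆ = 0 := by
    intro a ha b hb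
    induction ha using Submodule.span_induction with
    | mem x hx =>
      induction hb using Submodule.span_induction with
      | mem y hy => exact keyS x hx y hy
      | zero => rw [lie_zero, map_zero]
      | add y z _ _ h1 h2 => rw [lie_add, map_add, h1, h2, add_zero]
      | smul t y _ h1 => rw [lie_smul, map_smul, h1, smul_zero]
    | zero => rw [zero_lie, map_zero]
    | add x y _ _ h1 h2 => rw [add_lie, map_add, h1, h2, add_zero]
    | smul t x _ h1 => rw [smul_lie, map_smul, h1, smul_zero]
  intro X hX Y hY
  rw [hp] at hX hY
  obtain ⟨xc, hxc, xs, hxs, rfl⟩ := Submodule.mem_sup.mp hX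
  obtain ⟨yc, hyc, ys, hys, rfl⟩ := Submodule.mem_sup.mp hY
  have hxc' : ∀ y, ⁅y, xc⁆ = 0 :=
    (LieModule.mem_maxTrivSubmodule ℝ (FN (2 * s + 1)) (FN (2 * s + 1)) xc).mp hxc
  have hyc' : ∀ y, ⁅y, yc⁆ = 0 :=
    (LieModule.mem_maxTrivSubmodule ℝ (FN (2 * s + 1)) (FN (2 * s + 1)) yc).mp hyc
  have hxc'' : ∀ y, ⁅xc, y⁆ = (0 : FN (2 * s + 1)) := fun y => by
    rw [← lie_skew, hxc' y, neg_zero]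
  rw [add_lie, lie_add, lie_add, hyc' _, hyc' _, hxc'' ys]
  simp only [zero_add, add_zero]
  exact keySpan xs hxs ys hys

end FN
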